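/- The substitution product ∘ on 𝒥(R) is associative — equivalently, (𝒥(R), ∘) is a group — if and only if R[R,R] = 0, i.e. α(βγ − γβ) = 0 for all α, β, γ ∈ R. -/

import Mathlib

open PowerSeries

/-- The set `𝒥(R)` of formal power series `t + ∑_{i≥1} α_i t^{i+1}`. -/
def Jset (R : Type*) [Ring R] : Set (PowerSeries R) :=
  {f | coeff 0 f = 0 ∧ coeff 1 f = 1}

/-- The substitution product `f ∘ g = ∑_{m ≥ 0} α_m g^{m+1}`, defined coefficientwise. -/
noncomputable def Jcomp {R : Type*} [Ring R] (f g : PowerSeries R) : PowerSeries R :=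
  PowerSeries.mk fun k => ∑ m ∈ Finset.range k, coeff (m + 1) f * coeff k (g ^ (m + 1))

open Finset

section General
variable {R : Type*} [Ring R]

lemma coeff_pow_eq_zero {u : PowerSeries R} (h0 : coeff 0 u = 0) {k m : ℕ} (h : k < m) :
    coeff k (u ^ m) = 0 := by
  have hx : (X : PowerSeries R) ∣ u := X_dvd_iff.mpr (by rwa [← coeff_zero_eq_constantCoeff_apply])
  obtain ⟨v, rfl⟩ := hx
  have : (X : PowerSeries R) ^ m ∣ (X * v) ^ m := by
    rw [(commute_X v).symm.mul_pow]; exact Dvd.intro _ rfl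
  exact X_pow_dvd_iff.mp this k h

lemma c2 {u : PowerSeries R} (h0 : coeff 0 u = 0) :
    coeff 2 (u ^ 2) = coeff 1 u * coeff 1 u := by
  rw [sq, coeff_mul, Finset.Nat.sum_antidiagonal_eq_sum_range_succ_mk]
  simp [Finset.sum_range_succ, h0]

lemma c3 {u : PowerSeries R} (h0 : coeff 0 u = 0) :
    coeff 3 (u ^ 2) = coeff 1 u * coeff 2 u + coeff 2 u * coeff 1 u := by
  rw [sq, coeff_mul, Finset.Nat.sum_antidiagonal_eq_sum_range_succ_mk]
  simp [Finset.sum_range_succ, h0]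

lemma c4 {u : PowerSeries R} (h0 : coeff 0 u = 0) :
    coeff 4 (u ^ 2) = coeff 1 u * coeff 3 u + coeff 2 u * coeff 2 u
      + coeff 3 u * coeff 1 u := by
  rw [sq, coeff_mul, Finset.Nat.sum_antidiagonal_eq_sum_range_succ_mk]
  simp [Finset.sum_range_succ, h0]

lemma d3 {u : PowerSeries R} (h0 : coeff 0 u = 0) :
    coeff 3 (u ^ 3) = coeff 1 u * coeff 1 u * coeff 1 u := by
  rw [pow_succ, coeff_mul, Finset.Nat.sum_antidiagonal_eq_sum_range_succ_mk]
  simp [Finset.sum_range_succ, h0, c2 h0, coeff_pow_eq_zero h0]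

lemma d4 {u : PowerSeries R} (h0 : coeff 0 u = 0) :
    coeff 4 (u ^ 3) = coeff 1 u * coeff 1 u * coeff 2 u
      + (coeff 1 u * coeff 2 u + coeff 2 u * coeff 1 u) * coeff 1 u := by
  rw [pow_succ, coeff_mul, Finset.Nat.sum_antidiagonal_eq_sum_range_succ_mk]
  simp [Finset.sum_range_succ, h0, c2 h0, c3 h0, coeff_pow_eq_zero h0]

lemma e4 {u : PowerSeries R} (h0 : coeff 0 u = 0) :
    coeff 4 (u ^ 4) = coeff 1 u * coeff 1 u * coeff 1 u * coeff 1 u := by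
  rw [pow_succ, coeff_mul, Finset.Nat.sum_antidiagonal_eq_sum_range_succ_mk]
  simp [Finset.sum_range_succ, h0, d3 h0, coeff_pow_eq_zero h0]

/-- the quadratic series `t + a t^2` -/
noncomputable def qs (R : Type*) [Ring R] (a : R) : PowerSeries R :=
  PowerSeries.mk fun n => if n = 1 then 1 else if n = 2 then a else 0

@[simp] lemma coeff_qs (a : R) (n : ℕ) :
    coeff n (qs R a) = if n = 1 then 1 else if n = 2 then a else 0 := coeff_mk n _

lemma qs_mem (a : R) : qs R a ∈ Jset R := ⟨by simp, by simp⟩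

lemma qs0 (a : R) : coeff 0 (qs R a) = 0 := by simp

lemma coeff_Jcomp (f g : PowerSeries R) (k : ℕ) :
    coeff k (Jcomp f g) = ∑ m ∈ Finset.range k, coeff (m + 1) f * coeff k (g ^ (m + 1)) :=
  coeff_mk k _

lemma coeff_Jcomp_zero (f g : PowerSeries R) : coeff 0 (Jcomp f g) = 0 := by simp [Jcomp]

lemma Jcomp_coeffs (a b : R) :
    coeff 0 (Jcomp (qs R a) (qs R b)) = 0 ∧
    coeff 1 (Jcomp (qs R a) (qs R b)) = 1 ∧
    coeff 2 (Jcomp (qs R a) (qs R b)) = b + a ∧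
    coeff 3 (Jcomp (qs R a) (qs R b)) = a * b + a * b ∧
    coeff 4 (Jcomp (qs R a) (qs R b)) = a * (b * b) := by
  have h0 := qs0 (R := R) b
  refine ⟨?_, ?_, ?_, ?_, ?_⟩ <;>
    simp [coeff_Jcomp, Finset.sum_range_succ, c2 h0, c3 h0, c4 h0, d3 h0, d4 h0, e4 h0,
      mul_add, coeff_pow_eq_zero h0]

theorem Jcomp_forward (H : ∀ f ∈ Jset R, ∀ g ∈ Jset R, ∀ h ∈ Jset R,
      Jcomp (Jcomp f g) h = Jcomp f (Jcomp g h)) :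
    ∀ α β γ : R, α * (β * γ - γ * β) = 0 := by
  intro α β γ
  have key := congrArg (coeff 4)
    (H (qs R α) (qs_mem α) (qs R β) (qs_mem β) (qs R γ) (qs_mem γ))
  obtain ⟨hA0, hA1, hA2, hA3, hA4⟩ := Jcomp_coeffs (R := R) α β
  obtain ⟨hB0, hB1, hB2, hB3, hB4⟩ := Jcomp_coeffs (R := R) β γ
  have hγ := qs0 (R := R) γ
  have hL : coeff 4 (Jcomp (Jcomp (qs R α) (qs R β)) (qs R γ)) =
      1 * 0 + (β + α) * (γ * γ) + (α * β + α * β) * (1 * 1 * γ + (1 * γ + γ * 1) * 1)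
        + (α * (β * β)) * (1 * 1 * 1 * 1) := by
    rw [coeff_Jcomp]
    simp only [Finset.sum_range_succ, Finset.sum_range_zero, zero_add]
    rw [hA1, hA2, hA3, hA4, c4 hγ, d4 hγ, e4 hγ]
    simp
  have hR : coeff 4 (Jcomp (qs R α) (Jcomp (qs R β) (qs R γ))) =
      β * (γ * γ) + α * (1 * (β * γ + β * γ) + (γ + β) * (γ + β) + (β * γ + β * γ) * 1) := by
    rw [coeff_Jcomp]
    simp only [Finset.sum_range_succ, Finset.sum_range_zero, zero_add, pow_one]
    rw [c4 hB0, d4 hB0, e4 hB0, hB4]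
    simp [hB1, hB2, hB3]
  rw [hL, hR] at key
  have : α * (β * γ - γ * β) =
      (1 * 0 + (β + α) * (γ * γ) + (α * β + α * β) * (1 * 1 * γ + (1 * γ + γ * 1) * 1)
        + (α * (β * β)) * (1 * 1 * 1 * 1))
      - (β * (γ * γ) + α * (1 * (β * γ + β * γ) + (γ + β) * (γ + β) + (β * γ + β * γ) * 1)) := by
    noncomm_ring
  rw [this, key, sub_self]

/-- general substitution `p ∘ h = ∑ p_m h^m` -/
noncomputable def Ssub (p h : PowerSeries R) : PowerSeries R :=
  PowerSeries.mk fun k => ∑ m ∈ Finset.range (k + 1), coeff m p * coeff k (h ^ m)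

lemma coeff_Ssub (p h : PowerSeries R) (k : ℕ) :
    coeff k (Ssub p h) = ∑ m ∈ Finset.range (k + 1), coeff m p * coeff k (h ^ m) :=
  coeff_mk k _

lemma Jcomp_eq_Ssub {p : PowerSeries R} (hp : coeff 0 p = 0) (h : PowerSeries R) :
    Jcomp p h = Ssub p h := by
  ext k
  rw [coeff_Ssub, Finset.sum_range_succ']
  simp [Jcomp, hp]

lemma Ssub_one (h : PowerSeries R) : Ssub 1 h = 1 := by
  ext k
  rw [coeff_Ssub]
  simp [coeff_one]

end General

section Comm
variable {R : Type*} [CommRing R]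

lemma Ssub_mul {h : PowerSeries R} (h0 : coeff 0 h = 0) (p q : PowerSeries R) :
    Ssub (p * q) h = Ssub p h * Ssub q h := by
  ext k
  set F : ℕ × ℕ → R := fun x => coeff x.1 p * coeff x.2 q * coeff k (h ^ x.1 * h ^ x.2)
    with hF
  have hFvanish : ∀ x : ℕ × ℕ, k < x.1 + x.2 → F x = 0 := by
    intro x hx
    have : coeff k (h ^ x.1 * h ^ x.2) = 0 := by
      rw [coeff_mul]
      refine Finset.sum_eq_zero fun ab hab => ?_
      rw [Finset.HasAntidiagonal.mem_antidiagonal] at hab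
      rcases lt_or_ge ab.1 x.1 with hlt | hge
      · rw [coeff_pow_eq_zero h0 hlt, zero_mul]
      · have : ab.2 < x.2 := by omega
        rw [coeff_pow_eq_zero h0 this, mul_zero]
    simp [hF, this]
  have hLHS : coeff k (Ssub (p * q) h)
      = ∑ m ∈ Finset.range (k + 1), ∑ x ∈ antidiagonal m, F x := by
    rw [coeff_Ssub]
    refine Finset.sum_congr rfl fun m _ => ?_
    rw [coeff_mul, Finset.sum_mul]
    refine Finset.sum_congr rfl fun x hx => ?_
    rw [Finset.HasAntidiagonal.mem_antidiagonal] at hx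
    simp only [hF, ← pow_add, hx]
  have hdisj : (↑(Finset.range (k + 1)) : Set ℕ).PairwiseDisjoint antidiagonal := by
    intro a _ b _ hab
    simp only [Finset.disjoint_left]
    intro x hxa hxb
    rw [Finset.HasAntidiagonal.mem_antidiagonal] at hxa hxb
    exact hab (hxa ▸ hxb ▸ rfl)
  have hbi : ∑ m ∈ Finset.range (k + 1), ∑ x ∈ antidiagonal m, F x
      = ∑ x ∈ (Finset.range (k + 1)).biUnion antidiagonal, F x :=
    (Finset.sum_biUnion hdisj).symm
  have hsq : ∑ x ∈ (Finset.range (k + 1)).biUnion antidiagonal, F x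
      = ∑ x ∈ Finset.range (k + 1) ×ˢ Finset.range (k + 1), F x := by
    refine Finset.sum_subset ?_ ?_
    · intro x hx
      simp only [Finset.mem_biUnion] at hx
      obtain ⟨m, hm, hxm⟩ := hx
      rw [Finset.HasAntidiagonal.mem_antidiagonal] at hxm
      rw [Finset.mem_range] at hm
      simp only [Finset.mem_product, Finset.mem_range]
      omega
    · intro x hx hnx
      refine hFvanish x ?_
      by_contra hle
      push_neg at hle
      exact hnx (Finset.mem_biUnion.mpr ⟨x.1 + x.2, Finset.mem_range.mpr (by omega),
        Finset.HasAntidiagonal.mem_antidiagonal.mpr rfl⟩)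
  have hRHS : coeff k (Ssub p h * Ssub q h)
      = ∑ ab ∈ antidiagonal k, ∑ x ∈ Finset.range (k + 1) ×ˢ Finset.range (k + 1),
          coeff x.1 p * coeff x.2 q * (coeff ab.1 (h ^ x.1) * coeff ab.2 (h ^ x.2)) := by
    rw [coeff_mul]
    refine Finset.sum_congr rfl fun ab hab => ?_
    rw [Finset.HasAntidiagonal.mem_antidiagonal] at hab
    rw [coeff_Ssub, coeff_Ssub]
    have e1 : ∑ m ∈ Finset.range (ab.1 + 1), coeff m p * coeff ab.1 (h ^ m)
        = ∑ m ∈ Finset.range (k + 1), coeff m p * coeff ab.1 (h ^ m) := by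
      refine Finset.sum_subset (Finset.range_subset_range.mpr (by omega)) ?_
      intro m _ hm
      rw [Finset.mem_range, not_lt] at hm
      rw [coeff_pow_eq_zero h0 (by omega), mul_zero]
    have e2 : ∑ m ∈ Finset.range (ab.2 + 1), coeff m q * coeff ab.2 (h ^ m)
        = ∑ m ∈ Finset.range (k + 1), coeff m q * coeff ab.2 (h ^ m) := by
      refine Finset.sum_subset (Finset.range_subset_range.mpr (by omega)) ?_
      intro m _ hm
      rw [Finset.mem_range, not_lt] at hm
      rw [coeff_pow_eq_zero h0 (by omega), mul_zero]
    rw [e1, e2, Finset.sum_mul_sum]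
    rw [← Finset.sum_product']
    refine Finset.sum_congr rfl fun x _ => ?_
    ring
  rw [hLHS, hbi, hsq, hRHS, Finset.sum_comm]
  refine Finset.sum_congr rfl fun x _ => ?_
  simp only [hF, coeff_mul, Finset.mul_sum]

lemma Ssub_pow {h : PowerSeries R} (h0 : coeff 0 h = 0) (p : PowerSeries R) (d : ℕ) :
    Ssub (p ^ d) h = (Ssub p h) ^ d := by
  induction d with
  | zero => simpa using Ssub_one h
  | succ n ih => rw [pow_succ, Ssub_mul h0, ih, pow_succ]

theorem Jcomp_assoc {f g h : PowerSeries R} (hf : coeff 0 f = 0) (hg : coeff 0 g = 0)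
    (hh : coeff 0 h = 0) : Jcomp (Jcomp f g) h = Jcomp f (Jcomp g h) := by
  rw [Jcomp_eq_Ssub (coeff_Jcomp_zero f g) h, Jcomp_eq_Ssub hf g, Jcomp_eq_Ssub hf,
    Jcomp_eq_Ssub hg h]
  ext k
  rw [coeff_Ssub, coeff_Ssub]
  have : ∀ d, coeff k ((Ssub g h) ^ d) = ∑ m ∈ Finset.range (k + 1),
      coeff m (g ^ d) * coeff k (h ^ m) := by
    intro d
    rw [← Ssub_pow hh, coeff_Ssub]
  simp_rw [this, Finset.mul_sum, coeff_Ssub]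
  rw [Finset.sum_comm]
  refine Finset.sum_congr rfl fun m hm => ?_
  rw [Finset.mem_range] at hm
  rw [Finset.sum_mul]
  refine (Finset.sum_subset (Finset.range_subset_range.mpr (by omega)) ?_).trans
    (Finset.sum_congr rfl fun d _ => by ring)
  intro d _ hd
  rw [Finset.mem_range, not_lt] at hd
  rw [coeff_pow_eq_zero hg (by omega), mul_zero, zero_mul]

end Comm

/-- The substitution product on `𝒥(R)` is associative (equivalently, `(𝒥(R),∘)` is a
group) if and only if `R[R,R] = 0`. -/
theorem statement1 (K : Type*) [Field K] [CharZero K]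
    (R : Type*) [Ring R] [Algebra K R] :
    (∀ f ∈ Jset R, ∀ g ∈ Jset R, ∀ h ∈ Jset R,
        Jcomp (Jcomp f g) h = Jcomp f (Jcomp g h)) ↔
      (∀ α β γ : R, α * (β * γ - γ * β) = 0) := by
  constructor
  · exact fun H => Jcomp_forward H
  · intro hC f hf g hg h hh
    letI : CommRing R :=
      { ‹Ring R› with
        mul_comm := fun a b => by
          have h1 := hC 1 a b
          rw [one_mul, sub_eq_zero] at h1
          exact h1 }
    exact Jcomp_assoc hf.1 hg.1 hh.1
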